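/- Fix nodes i, j ∈ Fin n. There exists a map g : Fin h → Fin n with g w ∈ H i w for all w such that ∑_{w : g w = j} μ w = m_{i,j}. (Tightness of the upper bound in Theorem 1: some path-wise feasible deterministic update rule at node i attains transition probability m_{i,j} to node j.) -/
import Mathlib

/-- Tightness of the upper bound in Theorem 1: some path-wise feasible
deterministic update rule at node `i` attains transition probability
`m i j = ∑_{w : j ∈ H i w} μ w` to node `j`. -/
theorem upper_bound_tight
    (n h : ℕ) (hn : 1 ≤ n) (hh : 1 ≤ h)
    (H : Fin n → Fin h → Finset (Fin n))
    (hne : ∀ i w, (H i w).Nonempty)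
    (μ : Fin h → ℝ) (hμ0 : ∀ w, 0 ≤ μ w) (hμ1 : ∑ w, μ w = 1)
    (i j : Fin n) :
    ∃ g : Fin h → Fin n, (∀ w, g w ∈ H i w) ∧
      ∑ w ∈ Finset.univ.filter (fun w => g w = j), μ w
        = ∑ w ∈ Finset.univ.filter (fun w => j ∈ H i w), μ w := by
  refine ⟨fun w => if j ∈ H i w then j else (hne i w).choose, fun w => ?_, ?_⟩
  · by_cases hj : j ∈ H i w
    · simpa [hj]
    · simpa [hj] using (hne i w).choose_spec
  · congr 1
    ext w
    by_cases hj : j ∈ H i w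
    · simp [hj]
    · simp only [Finset.mem_filter, Finset.mem_univ, true_and, hj, if_neg, iff_false]
      intro hc
      exact hj (hc ▸ (hne i w).choose_spec)
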